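/- Let k_z, k_ż, k_i, C be real numbers with k_z > 0, k_ż > 0, k_i > 0, k_z·k_ż > k_i, and C ≥ 0. Let w : ℝ → ℝ be a continuous function with |w(t)| ≤ C for all t, and let e₁, e₂, e₃ : ℝ → ℝ satisfy, for every t: e₁'(t) = e₂(t), e₂'(t) = −k_z·e₁(t) − k_ż·e₂(t) − k_i·e₃(t) + w(t), and e₃'(t) = e₁(t) (derivatives in the sense of HasDerivAt). Then there exists M ∈ ℝ such that |e₁(t)| ≤ M, |e₂(t)| ≤ M, and |e₃(t)| ≤ M for all t ≥ 0. -/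

import Mathlib

lemma gronwall_aux (V g : ℝ → ℝ) (σ K : ℝ) (hσ : 0 < σ)
    (hd : ∀ t, HasDerivAt V (g t) t) (hle : ∀ t, g t ≤ -σ * V t + K) :
    ∀ t, 0 ≤ t → V t ≤ max (V 0) (K / σ) := by
  intro t ht
  set h : ℝ → ℝ := fun s => (V s - K / σ) * Real.exp (σ * s) with hh
  have hder : ∀ s, HasDerivAt h ((g s + σ * (V s - K / σ)) * Real.exp (σ * s)) s := by
    intro s
    have h1 : HasDerivAt (fun s => V s - K / σ) (g s) s := (hd s).sub_const _
    have h2 : HasDerivAt (fun s => Real.exp (σ * s)) (σ * Real.exp (σ * s)) s := by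
      exact ((Real.hasDerivAt_exp (σ * s)).comp s ((hasDerivAt_id s).const_mul σ)).congr_deriv (by ring)
    have := h1.mul h2
    exact this.congr_deriv (by ring)
  have hanti : Antitone h := by
    apply antitone_of_deriv_nonpos
    · intro s; exact (hder s).differentiableAt
    · intro s
      rw [(hder s).deriv]
      have h3 := hle s
      have hKσ : σ * (K / σ) = K := mul_div_cancel₀ K hσ.ne'
      nlinarith [Real.exp_pos (σ * s)]
  have hht : h t ≤ h 0 := hanti ht
  have h0 : h 0 = V 0 - K / σ := by simp [hh]
  rcases le_or_gt (V t) (K / σ) with hc | hc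
  · exact hc.trans (le_max_right _ _)
  · have hexp : (1 : ℝ) ≤ Real.exp (σ * t) := by
      rw [Real.one_le_exp_iff]; positivity
    have : V t ≤ V 0 := by
      rw [h0] at hht
      simp only [hh] at hht
      nlinarith
    exact this.trans (le_max_left _ _)

set_option maxHeartbeats 1000000 in
theorem outer_loop_iss_boundedness
    (kz kdz ki C : ℝ) (hkz : 0 < kz) (hkdz : 0 < kdz) (hki : 0 < ki)
    (hrh : ki < kz * kdz) (hC : 0 ≤ C)
    (w : ℝ → ℝ) (hw_cont : Continuous w) (hw : ∀ t, |w t| ≤ C)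
    (e₁ e₂ e₃ : ℝ → ℝ)
    (he₁ : ∀ t, HasDerivAt e₁ (e₂ t) t)
    (he₂ : ∀ t, HasDerivAt e₂ (-kz * e₁ t - kdz * e₂ t - ki * e₃ t + w t) t)
    (he₃ : ∀ t, HasDerivAt e₃ (e₁ t) t) :
    ∃ M : ℝ, ∀ t, 0 ≤ t → |e₁ t| ≤ M ∧ |e₂ t| ≤ M ∧ |e₃ t| ≤ M := by
  have hd : 0 < kz * kdz - ki := by linarith
  -- m0 : lower-bound constant for the quadratic part
  obtain ⟨m0, hm0, hm0le, hQ⟩ :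
      ∃ m0 : ℝ, 0 < m0 ∧ m0 ≤ 1/2 ∧
        ∀ x y : ℝ, m0 * (x^2 + y^2) ≤ kdz*ki/2 * x^2 + ki * x * y + kz/2 * y^2 := by
    refine ⟨min (1/2) (ki * (kz*kdz - ki) / (2*(kdz*ki + kz))), ?_, min_le_left _ _, ?_⟩
    · apply lt_min (by norm_num)
      apply div_pos (mul_pos hki hd) (by positivity)
    · intro x y
      have h1 : min (1/2) (ki * (kz*kdz - ki) / (2*(kdz*ki + kz))) * (x^2+y^2)
          ≤ (ki * (kz*kdz - ki) / (2*(kdz*ki + kz))) * (x^2+y^2) := by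
        apply mul_le_mul_of_nonneg_right (min_le_right _ _) (by positivity)
      refine h1.trans ?_
      rw [div_mul_eq_mul_div, div_le_iff₀ (by positivity)]
      nlinarith [sq_nonneg (kdz*ki*x + ki*y), sq_nonneg (ki*x + kz*y)]
  -- ε : size of the cross perturbation
  obtain ⟨ε, hε, hεm, hεB⟩ :
      ∃ ε : ℝ, 0 < ε ∧ ε ≤ m0/2 ∧
        ε * ((1+kdz)^2*ki + (ki-kz)^2 + 2*kz*ki) ≤ (kz*kdz - ki) * ki := by
    set B := (1+kdz)^2*ki + (ki-kz)^2 + 2*kz*ki with hB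
    have hBpos : 0 < B := by positivity
    refine ⟨min (m0/2) ((kz*kdz - ki) * ki / B), ?_, min_le_left _ _, ?_⟩
    · exact lt_min (by positivity) (div_pos (mul_pos hd hki) hBpos)
    · calc min (m0/2) ((kz*kdz - ki) * ki / B) * B
          ≤ ((kz*kdz - ki) * ki / B) * B := by
            apply mul_le_mul_of_nonneg_right (min_le_right _ _) hBpos.le
        _ = (kz*kdz - ki) * ki := div_mul_cancel₀ _ hBpos.ne'
  have hε14 : ε ≤ 1/4 := by linarith
  -- l : quadratic decay rate
  obtain ⟨l, hl, hld, hlε, hlεc⟩ :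
      ∃ l : ℝ, 0 < l ∧ l ≤ (kz*kdz - ki)/2 ∧ l ≤ ε/2 ∧ l ≤ ε*ki/2 :=
    ⟨min ((kz*kdz - ki)/2) (min (ε/2) (ε*ki/2)),
      lt_min (by positivity) (lt_min (by positivity) (by positivity)),
      min_le_left _ _, (min_le_right _ _).trans (min_le_left _ _),
      (min_le_right _ _).trans (min_le_right _ _)⟩
  -- K : disturbance offset
  obtain ⟨K, hK0, hKprop⟩ :
      ∃ K : ℝ, 0 ≤ K ∧ ∀ X Y U W : ℝ, |W| ≤ C →
        U * W + ε * ((X - Y) * W) ≤ l/2 * (X^2 + Y^2 + U^2) + K := by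
    refine ⟨(3*C^2 + 6*ε^2*C^2) / (2*l), by positivity, ?_⟩
    intro X Y U W hWC
    rw [← sub_le_iff_le_add', le_div_iff₀ (by positivity)]
    obtain ⟨hW1, hW2⟩ := abs_le.mp hWC
    have hWsq : W^2 ≤ C^2 := by nlinarith
    have hWsq2 : ε^2 * W^2 ≤ ε^2 * C^2 :=
      mul_le_mul_of_nonneg_left hWsq (sq_nonneg ε)
    nlinarith [sq_nonneg (l*U - W), sq_nonneg (l*X - ε*W), sq_nonneg (l*Y + ε*W)]
  -- Λ : upper-bound constant, σ : linear decay rate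
  obtain ⟨Λ, hΛdef⟩ : ∃ Λ : ℝ, Λ = 1 + kdz*ki + kz + ki := ⟨_, rfl⟩
  have hΛ : 0 < Λ := by rw [hΛdef]; positivity
  obtain ⟨σ, hσdef⟩ : ∃ σ : ℝ, σ = l / (2*Λ) := ⟨_, rfl⟩
  have hσ : 0 < σ := by rw [hσdef]; positivity
  have hσΛ : σ * Λ = l/2 := by
    rw [hσdef, div_mul_eq_mul_div, mul_comm (2:ℝ) Λ, ← div_div, mul_div_assoc,
      div_self hΛ.ne', mul_one]
  -- the Lyapunov function and its derivative
  obtain ⟨V, hVdef⟩ : ∃ V : ℝ → ℝ, V = fun s => (e₂ s + kdz * e₁ s)^2/2 + ki * (e₃ s * e₁ s)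
      + kz/2 * (e₁ s)^2 + kdz*ki/2 * (e₃ s)^2
      + ε * ((e₃ s - e₁ s) * (e₂ s + kdz * e₁ s)) := ⟨_, rfl⟩
  obtain ⟨g, hgdef⟩ : ∃ g : ℝ → ℝ, g = fun s =>
      -(kz*kdz - ki) * (e₁ s)^2 + (e₂ s + kdz * e₁ s) * w s
      + ε * (-(e₂ s + kdz * e₁ s)^2 - ki*(e₃ s)^2 + (1+kdz) * (e₁ s) * (e₂ s + kdz * e₁ s)
        + (ki - kz) * (e₃ s) * (e₁ s) + kz * (e₁ s)^2 + (e₃ s - e₁ s) * w s) := ⟨_, rfl⟩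
  have hu : ∀ t, HasDerivAt (fun s => e₂ s + kdz * e₁ s)
      ((-kz * e₁ t - kdz * e₂ t - ki * e₃ t + w t) + kdz * e₂ t) t :=
    fun t => (he₂ t).add ((he₁ t).const_mul kdz)
  have hVd : ∀ t, HasDerivAt V (g t) t := by
    intro t
    have h1 := ((hu t).mul (hu t)).div_const 2
    have h2 := ((he₃ t).mul (he₁ t)).const_mul ki
    have h3 := (((he₁ t).mul (he₁ t))).const_mul (kz/2)
    have h4 := (((he₃ t).mul (he₃ t))).const_mul (kdz*ki/2)
    have h5 := (((he₃ t).sub (he₁ t)).mul (hu t)).const_mul ε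
    have htot := (((h1.add h2).add h3).add h4).add h5
    have hValt : HasDerivAt (fun s => (e₂ s + kdz * e₁ s) * (e₂ s + kdz * e₁ s) / 2
        + ki * (e₃ s * e₁ s) + kz/2 * (e₁ s * e₁ s) + kdz*ki/2 * (e₃ s * e₃ s)
        + ε * ((e₃ s - e₁ s) * (e₂ s + kdz * e₁ s))) (g t) t := by
      exact htot.congr_deriv (by simp only [hgdef, Pi.sub_apply]; ring)
    have hVeq : V = fun s => (e₂ s + kdz * e₁ s) * (e₂ s + kdz * e₁ s) / 2
        + ki * (e₃ s * e₁ s) + kz/2 * (e₁ s * e₁ s) + kdz*ki/2 * (e₃ s * e₃ s)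
        + ε * ((e₃ s - e₁ s) * (e₂ s + kdz * e₁ s)) := by
      funext s; simp only [hVdef]; ring
    rw [hVeq]
    exact hValt
  -- key pointwise differential inequality
  have hkey : ∀ t, g t ≤ -σ * V t + K := by
    intro t
    obtain ⟨x, hx⟩ : ∃ x : ℝ, x = e₃ t := ⟨_, rfl⟩
    obtain ⟨y, hy⟩ : ∃ y : ℝ, y = e₁ t := ⟨_, rfl⟩
    obtain ⟨u, hu2⟩ : ∃ u : ℝ, u = e₂ t + kdz * e₁ t := ⟨_, rfl⟩
    obtain ⟨W, hW⟩ : ∃ W : ℝ, W = w t := ⟨_, rfl⟩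
    have step1 : ε * (-u^2 - ki*x^2 + (1+kdz)*y*u + (ki-kz)*x*y + kz*y^2)
        ≤ -(ε/2)*u^2 - (ε*ki/2)*x^2 + ((kz*kdz-ki)/2)*y^2 := by
      have key2 : (2*ki) * (ε * (-u^2 - ki*x^2 + (1+kdz)*y*u + (ki-kz)*x*y + kz*y^2))
          ≤ (2*ki) * (-(ε/2)*u^2 - (ε*ki/2)*x^2 + ((kz*kdz-ki)/2)*y^2) := by
        nlinarith only [mul_nonneg (mul_nonneg hki.le hε.le) (sq_nonneg (u - (1+kdz)*y)),
          mul_nonneg hε.le (sq_nonneg (ki*x - (ki-kz)*y)),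
          mul_nonneg (sub_nonneg.2 hεB) (sq_nonneg y)]
      exact le_of_mul_le_mul_left key2 (by positivity)
    have step2 : u * W + ε * ((x - y) * W) ≤ l/2 * (x^2 + y^2 + u^2) + K := by
      rw [hW]; exact hKprop x y u (w t) (hw t)
    have hVt : V t = u^2/2 + ki * (x * y) + kz/2 * y^2 + kdz*ki/2 * x^2
        + ε * ((x - y) * u) := by
      simp only [hVdef]; rw [hx, hy, hu2]
    have hVup : V t ≤ Λ * (x^2 + y^2 + u^2) := by
      rw [hΛdef, hVt]
      have cε : (0:ℝ) ≤ 1/2 - ε := by linarith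
      nlinarith only [mul_nonneg hki.le (sq_nonneg (x - y)),
        mul_nonneg hε.le (sq_nonneg (x - u)), mul_nonneg hε.le (sq_nonneg (y + u)),
        sq_nonneg x, sq_nonneg y, sq_nonneg u,
        mul_nonneg cε (sq_nonneg x), mul_nonneg cε (sq_nonneg y),
        mul_nonneg cε (sq_nonneg u),
        mul_nonneg (mul_nonneg hkdz.le hki.le) (sq_nonneg x),
        mul_nonneg (mul_nonneg hkdz.le hki.le) (sq_nonneg y),
        mul_nonneg (mul_nonneg hkdz.le hki.le) (sq_nonneg u),
        mul_nonneg hkz.le (sq_nonneg x), mul_nonneg hkz.le (sq_nonneg y),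
        mul_nonneg hkz.le (sq_nonneg u),
        mul_nonneg hki.le (sq_nonneg x), mul_nonneg hki.le (sq_nonneg y),
        mul_nonneg hki.le (sq_nonneg u),
        mul_nonneg hε.le (sq_nonneg x), mul_nonneg hε.le (sq_nonneg y),
        mul_nonneg hε.le (sq_nonneg u)]
    have hσV : σ * V t ≤ l/2 * (x^2 + y^2 + u^2) := by
      calc σ * V t ≤ σ * (Λ * (x^2 + y^2 + u^2)) :=
            mul_le_mul_of_nonneg_left hVup hσ.le
        _ = σ * Λ * (x^2 + y^2 + u^2) := by ring
        _ = l/2 * (x^2 + y^2 + u^2) := by rw [hσΛ]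
    have hg : g t = -(kz*kdz - ki) * y^2 + (u * W + ε * ((x - y) * W))
        + ε * (-u^2 - ki*x^2 + (1+kdz)*y*u + (ki-kz)*x*y + kz*y^2) := by
      simp only [hgdef]; rw [hx, hy, hu2, hW]; ring
    rw [hg]
    have c1 := mul_nonneg (sub_nonneg.2 hlεc) (sq_nonneg x)
    have c2 := mul_nonneg (sub_nonneg.2 hld) (sq_nonneg y)
    have c3 := mul_nonneg (sub_nonneg.2 hlε) (sq_nonneg u)
    nlinarith only [step1, step2, hσV, c1, c2, c3, mul_nonneg hl.le (sq_nonneg x),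
      mul_nonneg hl.le (sq_nonneg y), mul_nonneg hl.le (sq_nonneg u)]
  -- Gronwall
  have hbound := gronwall_aux V g σ K hσ hVd hkey
  obtain ⟨Vmax, hVmaxdef⟩ : ∃ Vmax : ℝ, Vmax = max (V 0) (K/σ) := ⟨_, rfl⟩
  have hVmax0 : 0 ≤ Vmax := by
    rw [hVmaxdef]; exact le_trans (div_nonneg hK0 hσ.le) (le_max_right _ _)
  have hbound' : ∀ t, 0 ≤ t → V t ≤ Vmax := by
    intro t ht; rw [hVmaxdef]; exact hbound t ht
  -- lower bound on V
  have hVlow : ∀ t, m0/2 * ((e₃ t)^2 + (e₁ t)^2 + (e₂ t + kdz * e₁ t)^2) ≤ V t := by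
    intro t
    obtain ⟨x, hx⟩ : ∃ x : ℝ, x = e₃ t := ⟨_, rfl⟩
    obtain ⟨y, hy⟩ : ∃ y : ℝ, y = e₁ t := ⟨_, rfl⟩
    obtain ⟨u, hu2⟩ : ∃ u : ℝ, u = e₂ t + kdz * e₁ t := ⟨_, rfl⟩
    have hq := hQ x y
    have c1 : (0:ℝ) ≤ m0/2 - ε := by linarith
    have c2 : (0:ℝ) ≤ 1/2 - ε - m0/2 := by linarith
    have hVt : V t = u^2/2 + ki * (x * y) + kz/2 * y^2 + kdz*ki/2 * x^2
        + ε * ((x - y) * u) := by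
      simp only [hVdef]; rw [hx, hy, hu2]
    rw [← hu2, ← hx, ← hy, hVt]
    nlinarith only [hq, mul_nonneg hε.le (sq_nonneg (x + u)),
      mul_nonneg hε.le (sq_nonneg (u - y)),
      mul_nonneg c1 (sq_nonneg x), mul_nonneg c1 (sq_nonneg y),
      mul_nonneg c2 (sq_nonneg u),
      mul_nonneg hε.le (sq_nonneg x), mul_nonneg hε.le (sq_nonneg y)]
  obtain ⟨R, hRdef⟩ : ∃ R : ℝ, R = Real.sqrt (Vmax / (m0/2)) := ⟨_, rfl⟩
  have hR0 : 0 ≤ R := by rw [hRdef]; exact Real.sqrt_nonneg _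
  refine ⟨(1 + kdz) * R, ?_⟩
  intro t ht
  have hz : (e₃ t)^2 + (e₁ t)^2 + (e₂ t + kdz * e₁ t)^2 ≤ Vmax / (m0/2) := by
    rw [le_div_iff₀ (by positivity)]
    have h1 := hVlow t
    have h2 := hbound' t ht
    nlinarith only [h1, h2]
  have habs : ∀ v : ℝ, v^2 ≤ (e₃ t)^2 + (e₁ t)^2 + (e₂ t + kdz * e₁ t)^2 → |v| ≤ R := by
    intro v hv
    rw [hRdef, ← Real.sqrt_sq_eq_abs]
    exact Real.sqrt_le_sqrt (hv.trans hz)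
  have h1 : |e₁ t| ≤ R := habs _ (by nlinarith only [sq_nonneg (e₃ t), sq_nonneg (e₂ t + kdz * e₁ t)])
  have h3 : |e₃ t| ≤ R := habs _ (by nlinarith only [sq_nonneg (e₁ t), sq_nonneg (e₂ t + kdz * e₁ t)])
  have hu1 : |e₂ t + kdz * e₁ t| ≤ R := habs _ (by nlinarith only [sq_nonneg (e₁ t), sq_nonneg (e₃ t)])
  have h2 : |e₂ t| ≤ (1 + kdz) * R := by
    have hsplit : |e₂ t| ≤ |e₂ t + kdz * e₁ t| + kdz * |e₁ t| := by
      calc |e₂ t| = |(e₂ t + kdz * e₁ t) - kdz * e₁ t| := by ring_nf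
        _ ≤ |e₂ t + kdz * e₁ t| + |kdz * e₁ t| := abs_sub _ _
        _ = |e₂ t + kdz * e₁ t| + kdz * |e₁ t| := by
            rw [abs_mul, abs_of_pos hkdz]
    have hm := mul_le_mul_of_nonneg_left h1 hkdz.le
    calc |e₂ t| ≤ |e₂ t + kdz * e₁ t| + kdz * |e₁ t| := hsplit
      _ ≤ R + kdz * R := by linarith
      _ = (1 + kdz) * R := by ring
  have hR1 : R ≤ (1 + kdz) * R := by nlinarith only [hR0, hkdz.le]
  exact ⟨h1.trans hR1, h2, h3.trans hR1⟩
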